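/- For any nonnegative integer N, integer k, and ν ∈ {0,1}, the generating function for partitions into parts at most 2N+ν with BG-rank equal to k is q^{2k²-k} / ((q²;q²)_{N+k} · (q²;q²)_{N+ν-k}). -/

import Mathlib

open Finset PowerSeries

/-- Number of cells of the Young diagram with (column - row) ≡ i (mod t). -/
def rCount (μ : YoungDiagram) (t : ℕ) (i : ZMod t) : ℕ :=
  (μ.cells.filter (fun c => ((c.2 : ZMod t) - (c.1 : ZMod t) = i))).card

/-- GBG-rank of a partition mod t: Σ_{i<t} r_i ω_t^i where ω_t = e^{2πi/t}. -/
noncomputable def GBG (μ : YoungDiagram) (t : ℕ) : ℂ :=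
  ∑ i ∈ Finset.range t, (rCount μ t (i : ZMod t) : ℂ) *
    Complex.exp (2 * (Real.pi : ℂ) * Complex.I * (i : ℂ) / (t : ℂ))

/-- Generating function (formal power series in q) counting Young diagrams of each size
satisfying the predicate P. -/
noncomputable def GF (P : YoungDiagram → Prop) : PowerSeries ℚ :=
  PowerSeries.mk fun n => (Nat.card {μ : YoungDiagram // μ.cells.card = n ∧ P μ} : ℚ)

/-- (q^s; q^s)_L  = ∏_{j=0}^{L-1} (1 - q^{s(j+1)}). -/
noncomputable def qp (s L : ℕ) : PowerSeries ℚ :=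
  ∏ j ∈ Finset.range L, (1 - (PowerSeries.X : PowerSeries ℚ) ^ (s * (j + 1)))

/-- 1/(q^s;q^s)_L with the convention that it is 0 for L < 0. -/
noncomputable def qpi (s : ℕ) (L : ℤ) : PowerSeries ℚ :=
  if 0 ≤ L then (qp s L.toNat)⁻¹ else 0

/-- Gaussian binomial coefficient [m choose n] in the variable q^s,
equal to 0 unless m ≥ n ≥ 0. -/
noncomputable def gbinom (s : ℕ) (m n : ℤ) : PowerSeries ℚ :=
  if 0 ≤ n ∧ n ≤ m then qp s m.toNat * (qp s n.toNat)⁻¹ * (qp s (m - n).toNat)⁻¹ else 0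

/-- (-q^s; q^{2s})_L = ∏_{j=0}^{L-1}(1 + q^{s(2j+1)}), with value 0 convention not needed
but defined as 0 for L < 0. -/
noncomputable def aqp (s : ℕ) (L : ℤ) : PowerSeries ℚ :=
  if 0 ≤ L then
    ∏ j ∈ Finset.range L.toNat, (1 + (PowerSeries.X : PowerSeries ℚ) ^ (s * (2 * j + 1)))
  else 0

/-- Multiplicity of the part m in the partition given by a Young diagram. -/
def mult (μ : YoungDiagram) (m : ℕ) : ℕ :=
  ((Finset.range (μ.colLen 0)).filter (fun j => μ.rowLen j = m)).card

/-- The Maya diagram / beta-set of a partition: the set {λ_j - j : j ≥ 1} ⊆ ℤ. -/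
def InS (μ : YoungDiagram) (x : ℤ) : Prop :=
  ∃ j : ℕ, (μ.rowLen j : ℤ) - (j + 1) = x

/-- `g` is the i-th component of the t-quotient of μ (Littlewood decomposition):
the Maya diagram of g is the i-th slice mod t of the Maya diagram of μ. -/
def QuotComp (t : ℕ) (i : ℕ) (μ g : YoungDiagram) : Prop :=
  ∀ m : ℤ, InS μ (t * m + i) ↔ InS g m

/-- μ is a t-core: its Young diagram has no rim hooks of length t, equivalently
its Maya diagram is closed under subtracting t. -/
def IsTCore (t : ℕ) (μ : YoungDiagram) : Prop :=
  ∀ x : ℤ, InS μ x → InS μ (x - t)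

/-- i-th component of the vector n⃗(μ,t):  r_i - r_{i+1} (indices mod t). -/
def nVec (μ : YoungDiagram) (t : ℕ) (i : ℕ) : ℤ :=
  (rCount μ t (i : ZMod t) : ℤ) - (rCount μ t ((i + 1 : ℕ) : ZMod t) : ℤ)

/-- `h` is the t-core of μ: h is a t-core with the same vector n⃗ as μ. -/
def TCoreOf (t : ℕ) (μ h : YoungDiagram) : Prop :=
  IsTCore t h ∧ ∀ i : ℕ, i < t → nVec h t i = nVec μ t i

set_option maxHeartbeats 1000000
section BGaux

def BGr (μ : YoungDiagram) : ℤ :=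
  (rCount μ 2 (0 : ZMod 2) : ℤ) - (rCount μ 2 (1 : ZMod 2) : ℤ)

def preCells (M : ℕ) (μ : YoungDiagram) : Finset (ℕ × ℕ) :=
  ({0} ×ˢ Finset.range M) ∪ μ.cells.image (fun c => (c.1 + 1, c.2))

lemma mem_preCells {M : ℕ} {μ : YoungDiagram} {i j : ℕ} :
    (i, j) ∈ preCells M μ ↔ (i = 0 ∧ j < M) ∨ (∃ i', i = i' + 1 ∧ (i', j) ∈ μ) := by
  unfold preCells
  simp only [Finset.mem_union, Finset.mem_product, Finset.mem_singleton, Finset.mem_range,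
    Finset.mem_image, YoungDiagram.mem_cells, Prod.ext_iff]
  constructor
  · rintro (⟨h0, hM⟩ | ⟨⟨a, b⟩, hab, ha, hb⟩)
    · exact Or.inl ⟨h0, hM⟩
    · exact Or.inr ⟨a, ha.symm, by simpa [← hb] using hab⟩
  · rintro (⟨h0, hM⟩ | ⟨i', rfl, hmem⟩)
    · exact Or.inl ⟨h0, hM⟩
    · exact Or.inr ⟨(i', j), hmem, rfl, rfl⟩

/-- prepend a first row of length `M` -/
def preYD (M : ℕ) (μ : YoungDiagram) (h : μ.rowLen 0 ≤ M) : YoungDiagram where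
  cells := preCells M μ
  isLowerSet := by
    rintro ⟨i1, j1⟩ ⟨i2, j2⟩ ⟨hi, hj⟩ hmem
    rw [Finset.mem_coe, mem_preCells] at hmem
    rw [Finset.mem_coe, mem_preCells]
    simp only at hi hj
    rcases hmem with ⟨h0, hM⟩ | ⟨a, ha, hab⟩
    · exact Or.inl ⟨by omega, by omega⟩
    · have hb2 : j1 < μ.rowLen a := YoungDiagram.mem_iff_lt_rowLen.mp hab
      cases i2 with
      | zero =>
        left
        refine ⟨rfl, ?_⟩
        have := μ.rowLen_anti 0 a (Nat.zero_le a)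
        omega
      | succ i2' =>
        right
        exact ⟨i2', rfl, μ.up_left_mem (by omega) (by omega) hab⟩

lemma mem_pre {M : ℕ} {μ : YoungDiagram} {h : μ.rowLen 0 ≤ M} {i j : ℕ} :
    (i, j) ∈ preYD M μ h ↔ (i = 0 ∧ j < M) ∨ (∃ i', i = i' + 1 ∧ (i', j) ∈ μ) :=
  mem_preCells

lemma rowLen_eq_of_mem_iff {μ : YoungDiagram} {i L : ℕ} (h : ∀ j, (i, j) ∈ μ ↔ j < L) :
    μ.rowLen i = L := by
  refine le_antisymm ?_ ?_
  · by_contra hc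
    push_neg at hc
    have hm := YoungDiagram.mem_iff_lt_rowLen.mpr hc
    rw [h] at hm
    omega
  · rcases Nat.eq_zero_or_pos L with rfl | hL
    · omega
    · have hm : (i, L - 1) ∈ μ := (h _).mpr (by omega)
      rw [YoungDiagram.mem_iff_lt_rowLen] at hm
      omega

lemma pre_rowLen0 {M : ℕ} {μ : YoungDiagram} (h : μ.rowLen 0 ≤ M) :
    (preYD M μ h).rowLen 0 = M := by
  apply rowLen_eq_of_mem_iff
  intro j
  rw [mem_pre]
  constructor
  · rintro (⟨_, hM⟩ | ⟨i', hi', _⟩) <;> omega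
  · intro hj
    exact Or.inl ⟨rfl, hj⟩

lemma pre_disjoint {M : ℕ} {μ : YoungDiagram} :
    Disjoint ({0} ×ˢ Finset.range M) (μ.cells.image (fun c => (c.1 + 1, c.2))) := by
  rw [Finset.disjoint_left]
  rintro ⟨i, j⟩ hij hmem
  simp only [Finset.mem_product, Finset.mem_singleton] at hij
  simp only [Finset.mem_image, Prod.ext_iff] at hmem
  obtain ⟨a, _, ha, _⟩ := hmem
  omega

lemma succ_inj : Function.Injective (fun c : ℕ × ℕ => (c.1 + 1, c.2)) := by
  rintro ⟨a, b⟩ ⟨c, d⟩ hcd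
  simp only [Prod.ext_iff] at hcd ⊢
  omega

lemma pre_card {M : ℕ} {μ : YoungDiagram} (h : μ.rowLen 0 ≤ M) :
    (preYD M μ h).cells.card = M + μ.cells.card := by
  show (({0} ×ˢ Finset.range M) ∪ μ.cells.image (fun c => (c.1 + 1, c.2))).card = _
  rw [Finset.card_union_of_disjoint pre_disjoint, Finset.card_product,
    Finset.card_singleton, Finset.card_range, Finset.card_image_of_injective _ succ_inj, one_mul]

lemma pre_rCount {M : ℕ} {μ : YoungDiagram} (h : μ.rowLen 0 ≤ M) (c : ZMod 2) :
    rCount (preYD M μ h) 2 c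
      = ((Finset.range M).filter (fun j : ℕ => ((j : ZMod 2) = c))).card + rCount μ 2 (c + 1) := by
  show ((({0} ×ˢ Finset.range M) ∪ μ.cells.image (fun x => (x.1 + 1, x.2))).filter
      (fun x : ℕ × ℕ => ((x.2 : ZMod 2) - (x.1 : ZMod 2) = c))).card = _
  rw [Finset.filter_union,
    Finset.card_union_of_disjoint (Finset.disjoint_filter_filter pre_disjoint)]
  congr 1
  · have himg : ({0} ×ˢ Finset.range M) = (Finset.range M).image (fun j : ℕ => ((0 : ℕ), j)) := by
      ext ⟨i, j⟩
      simp only [Finset.mem_product, Finset.mem_singleton, Finset.mem_range, Finset.mem_image,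
        Prod.ext_iff]
      constructor
      · rintro ⟨rfl, hj⟩; exact ⟨j, hj, rfl, rfl⟩
      · rintro ⟨a, ha, h0, rfl⟩; exact ⟨h0.symm, ha⟩
    rw [himg, Finset.filter_image, Finset.card_image_of_injective _
      (fun a b hab => by simpa [Prod.ext_iff] using hab)]
    congr 1
    apply Finset.filter_congr
    intro j _
    simp
  · rw [Finset.filter_image, Finset.card_image_of_injective _ succ_inj]
    show _ = (μ.cells.filter (fun x : ℕ × ℕ => ((x.2 : ZMod 2) - (x.1 : ZMod 2) = c + 1))).card
    congr 1
    apply Finset.filter_congr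
    rintro ⟨a, b⟩ _
    push_cast
    constructor
    · intro hh
      linear_combination hh
    · intro hh
      linear_combination hh

lemma diffEO (M : ℕ) :
    ((((Finset.range M).filter (fun j : ℕ => ((j : ZMod 2) = 0))).card : ℤ)
      - (((Finset.range M).filter (fun j : ℕ => ((j : ZMod 2) = 1))).card : ℤ))
      = ((M % 2 : ℕ) : ℤ) := by
  induction M with
  | zero => simp
  | succ M ih =>
    rw [Finset.range_add_one, Finset.filter_insert, Finset.filter_insert]
    have hnm : M ∉ Finset.range M := by simp
    by_cases hM : (M : ZMod 2) = 0
    · have hM2 : M % 2 = 0 := by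
        rwa [ZMod.natCast_eq_zero_iff, Nat.dvd_iff_mod_eq_zero] at hM
      have hM1 : ¬ ((M : ZMod 2) = 1) := by rw [hM]; decide
      rw [if_pos hM, if_neg hM1, Finset.card_insert_of_notMem
        (fun hc => hnm (Finset.mem_filter.mp hc).1)]
      omega
    · have hM1 : (M : ZMod 2) = 1 := by
        have h2 : ∀ x : ZMod 2, x = 0 ∨ x = 1 := by decide
        rcases h2 (M : ZMod 2) with h | h
        · exact absurd h hM
        · exact h
      have hM2 : M % 2 = 1 := by
        rcases Nat.mod_two_eq_zero_or_one M with h | h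
        · exfalso
          apply hM
          rwa [ZMod.natCast_eq_zero_iff, Nat.dvd_iff_mod_eq_zero]
        · exact h
      rw [if_neg hM, if_pos hM1, Finset.card_insert_of_notMem
        (fun hc => hnm (Finset.mem_filter.mp hc).1)]
      omega

lemma pre_BGr {M : ℕ} {μ : YoungDiagram} (h : μ.rowLen 0 ≤ M) :
    BGr (preYD M μ h) = ((M % 2 : ℕ) : ℤ) - BGr μ := by
  unfold BGr
  rw [pre_rCount h 0, pre_rCount h 1]
  rw [show (0 : ZMod 2) + 1 = 1 by decide, show (1 : ZMod 2) + 1 = 0 by decide]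
  have := diffEO M
  omega

/-- remove the first row -/
def tlYD (μ : YoungDiagram) : YoungDiagram where
  cells := (μ.cells.filter (fun c => c.1 ≠ 0)).image (fun c => (c.1 - 1, c.2))
  isLowerSet := by
    rintro ⟨i1, j1⟩ ⟨i2, j2⟩ ⟨hi, hj⟩ hmem
    rw [Finset.mem_coe] at hmem ⊢
    simp only [Finset.mem_image, Finset.mem_filter, YoungDiagram.mem_cells, Prod.ext_iff] at hmem ⊢
    simp only at hi hj
    obtain ⟨⟨a, b⟩, ⟨hab, ha0⟩, ha, hb⟩ := hmem
    refine ⟨(i2 + 1, j2), ⟨μ.up_left_mem (by omega) (by omega) hab, by omega⟩, by omega, rfl⟩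

lemma mem_tl {μ : YoungDiagram} {i j : ℕ} : (i, j) ∈ tlYD μ ↔ (i + 1, j) ∈ μ := by
  show (i, j) ∈ (μ.cells.filter (fun c => c.1 ≠ 0)).image (fun c => (c.1 - 1, c.2)) ↔ _
  simp only [Finset.mem_image, Finset.mem_filter, YoungDiagram.mem_cells, Prod.ext_iff]
  constructor
  · rintro ⟨⟨a, b⟩, ⟨hab, ha0⟩, ha, hb⟩
    have : a = i + 1 := by omega
    subst this
    subst hb
    exact hab
  · intro hm
    exact ⟨(i + 1, j), ⟨hm, by omega⟩, by omega, rfl⟩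

lemma tl_rowLen (μ : YoungDiagram) (i : ℕ) : (tlYD μ).rowLen i = μ.rowLen (i + 1) := by
  apply rowLen_eq_of_mem_iff
  intro j
  rw [mem_tl, YoungDiagram.mem_iff_lt_rowLen]

lemma tl_pre {M : ℕ} {μ : YoungDiagram} (h : μ.rowLen 0 ≤ M) : tlYD (preYD M μ h) = μ := by
  rw [YoungDiagram.ext_iff]
  ext ⟨i, j⟩
  simp only [YoungDiagram.mem_cells]
  rw [mem_tl, mem_pre]
  constructor
  · rintro (⟨h0, _⟩ | ⟨i', hi', hm⟩)
    · omega
    · have : i' = i := by omega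
      subst this
      exact hm
  · intro hm
    exact Or.inr ⟨i, rfl, hm⟩

lemma pre_tl {M : ℕ} {μ : YoungDiagram} (hr : μ.rowLen 0 = M) (h2 : (tlYD μ).rowLen 0 ≤ M) :
    preYD M (tlYD μ) h2 = μ := by
  rw [YoungDiagram.ext_iff]
  ext ⟨i, j⟩
  simp only [YoungDiagram.mem_cells]
  rw [mem_pre]
  constructor
  · rintro (⟨rfl, hM⟩ | ⟨i', rfl, hm⟩)
    · rw [YoungDiagram.mem_iff_lt_rowLen, hr]
      exact hM
    · exact mem_tl.mp hm
  · intro hm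
    cases i with
    | zero =>
      left
      refine ⟨rfl, ?_⟩
      rw [YoungDiagram.mem_iff_lt_rowLen, hr] at hm
      exact hm
    | succ i' =>
      exact Or.inr ⟨i', rfl, mem_tl.mpr hm⟩

lemma tl_rowLen0_le {μ : YoungDiagram} {M : ℕ} (hr : μ.rowLen 0 = M) :
    (tlYD μ).rowLen 0 ≤ M := by
  rw [tl_rowLen]
  have := μ.rowLen_anti 0 (0 + 1) (by omega)
  omega

/-! ### Finiteness -/

lemma subset_box (μ : YoungDiagram) (n : ℕ) (h : μ.cells.card = n) :
    μ.cells ⊆ Finset.range n ×ˢ Finset.range n := by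
  rintro ⟨i, j⟩ hij
  rw [Finset.mem_product, Finset.mem_range, Finset.mem_range]
  constructor
  · have hsub : (Finset.range (i + 1)).image (fun i' => (i', j)) ⊆ μ.cells := by
      intro x hx
      simp only [Finset.mem_image, Finset.mem_range] at hx
      obtain ⟨i', hi', rfl⟩ := hx
      exact μ.up_left_mem (by omega) le_rfl hij
    have hc := Finset.card_le_card hsub
    rw [Finset.card_image_of_injective _
      (fun a b hab => by simpa [Prod.ext_iff] using hab), Finset.card_range] at hc
    omega
  · have hsub : (Finset.range (j + 1)).image (fun j' => (i, j')) ⊆ μ.cells := by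
      intro x hx
      simp only [Finset.mem_image, Finset.mem_range] at hx
      obtain ⟨j', hj', rfl⟩ := hx
      exact μ.up_left_mem le_rfl (by omega) hij
    have hc := Finset.card_le_card hsub
    rw [Finset.card_image_of_injective _
      (fun a b hab => by simpa [Prod.ext_iff] using hab), Finset.card_range] at hc
    omega

lemma cells_injective : Function.Injective YoungDiagram.cells := by
  intro a b hab
  rwa [YoungDiagram.ext_iff]

lemma finite_sized (n : ℕ) : {μ : YoungDiagram | μ.cells.card = n}.Finite := by
  apply Set.Finite.of_finite_image (f := YoungDiagram.cells) ?_ cells_injective.injOn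
  apply Set.Finite.subset ((Finset.range n ×ˢ Finset.range n).powerset : Finset _).finite_toSet
  rintro s ⟨μ, hμ, rfl⟩
  simp only [Finset.coe_powerset, Set.mem_preimage, Set.mem_powerset_iff, Finset.coe_subset]
  exact subset_box μ n hμ

/-! ### The counting sets -/

def SA (n M : ℕ) (k : ℤ) : Set YoungDiagram :=
  {μ | μ.cells.card = n ∧ (μ.rowLen 0 ≤ M ∧ BGr μ = k)}

def SE (n M : ℕ) (k : ℤ) : Set YoungDiagram :=
  {μ | μ.cells.card = n ∧ (μ.rowLen 0 = M ∧ BGr μ = k)}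

lemma SA_finite (n M : ℕ) (k : ℤ) : (SA n M k).Finite :=
  (finite_sized n).subset (fun μ hμ => hμ.1)

lemma SE_finite (n M : ℕ) (k : ℤ) : (SE n M k).Finite :=
  (finite_sized n).subset (fun μ hμ => hμ.1)

lemma SA_split (n M : ℕ) (k : ℤ) :
    (SA n (M + 1) k).ncard = (SA n M k).ncard + (SE n (M + 1) k).ncard := by
  have hu : SA n (M + 1) k = SA n M k ∪ SE n (M + 1) k := by
    ext μ
    simp only [SA, SE, Set.mem_setOf_eq, Set.mem_union]
    constructor
    · rintro ⟨h1, h2, h3⟩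
      rcases Nat.lt_or_ge (μ.rowLen 0) (M + 1) with h | h
      · exact Or.inl ⟨h1, by omega, h3⟩
      · exact Or.inr ⟨h1, by omega, h3⟩
    · rintro (⟨h1, h2, h3⟩ | ⟨h1, h2, h3⟩) <;> exact ⟨h1, by omega, h3⟩
  rw [hu, Set.ncard_union_eq ?_ (SA_finite n M k) (SE_finite n (M + 1) k)]
  rw [Set.disjoint_left]
  rintro μ ⟨_, h2, _⟩ ⟨_, h2', _⟩
  omega

lemma SE_empty (n M : ℕ) (k : ℤ) (hn : n < M) : SE n M k = ∅ := by
  ext μ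
  simp only [SE, Set.mem_setOf_eq, Set.mem_empty_iff_false, iff_false]
  rintro ⟨h1, h2, _⟩
  have hsub : ({0} ×ˢ Finset.range M) ⊆ μ.cells := by
    rintro ⟨i, j⟩ hij
    simp only [Finset.mem_product, Finset.mem_singleton, Finset.mem_range] at hij
    obtain ⟨rfl, hj⟩ := hij
    rw [YoungDiagram.mem_cells, YoungDiagram.mem_iff_lt_rowLen, h2]
    exact hj
  have hc := Finset.card_le_card hsub
  rw [Finset.card_product, Finset.card_singleton, Finset.card_range, one_mul] at hc
  omega

/-- The key bijection: removing the first row -/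
lemma SE_ncard (m M : ℕ) (k : ℤ) :
    (SE (m + M) M k).ncard = (SA m M (((M % 2 : ℕ) : ℤ) - k)).ncard := by
  have hbij : Set.BijOn tlYD (SE (m + M) M k) (SA m M (((M % 2 : ℕ) : ℤ) - k)) := by
    refine ⟨?_, ?_, ?_⟩
    · rintro μ ⟨h1, h2, h3⟩
      have hle := tl_rowLen0_le h2
      have hpre := pre_tl h2 hle
      have hcard := pre_card hle
      rw [hpre] at hcard
      have hBG := pre_BGr hle
      rw [hpre] at hBG
      exact ⟨by omega, by rw [tl_rowLen]; have := μ.rowLen_anti 0 (0 + 1) (by omega); omega,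
        by omega⟩
    · rintro μ1 ⟨_, h2, _⟩ μ2 ⟨_, h2', _⟩ htl
      have e1 := pre_tl h2 (tl_rowLen0_le h2)
      have e2 := pre_tl h2' (tl_rowLen0_le h2')
      rw [← e1, ← e2]
      congr 1
    · rintro μ' ⟨h1, h2, h3⟩
      refine ⟨preYD M μ' h2, ⟨?_, ?_, ?_⟩, tl_pre h2⟩
      · rw [pre_card h2]; omega
      · exact pre_rowLen0 h2
      · rw [pre_BGr h2]; omega
  rw [← hbij.image_eq, Set.ncard_image_of_injOn hbij.injOn]

lemma qp_constantCoeff (L : ℕ) : PowerSeries.constantCoeff (qp 2 L) = 1 := by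
  unfold qp
  rw [map_prod]
  apply Finset.prod_eq_one
  intro j _
  rw [map_sub, map_one, map_pow, PowerSeries.constantCoeff_X, zero_pow (by omega), sub_zero]

lemma qp_ne_zero (L : ℕ) : qp 2 L ≠ 0 := fun h => by
  have := qp_constantCoeff L
  rw [h, map_zero] at this
  norm_num at this

lemma qp_mul_inv (L : ℕ) : qp 2 L * (qp 2 L)⁻¹ = 1 :=
  PowerSeries.mul_inv_cancel _ (by rw [qp_constantCoeff]; norm_num)

lemma qpi_zero' {L : ℤ} (h : L < 0) : qpi 2 L = 0 := by rw [qpi, if_neg (by omega)]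

lemma qpi_zero : qpi 2 0 = 1 := by
  rw [qpi, if_pos le_rfl]
  show (qp 2 0)⁻¹ = 1
  rw [show qp 2 0 = 1 from Finset.prod_range_zero _, inv_one]

lemma qpi_step (L : ℤ) : qpi 2 L = qpi 2 (L - 1) +
    (PowerSeries.X : PowerSeries ℚ) ^ ((2 * L).toNat) * qpi 2 L := by
  rcases lt_trichotomy L 0 with h | h | h
  · rw [qpi_zero' h, qpi_zero' (by omega), mul_zero, add_zero]
  · subst h
    rw [show (0:ℤ) - 1 = -1 by norm_num, qpi_zero' (show (-1:ℤ) < 0 by norm_num), qpi_zero,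
      show ((2:ℤ) * 0).toNat = 0 by norm_num, pow_zero, one_mul, zero_add]
  · rw [show qpi 2 L = (qp 2 L.toNat)⁻¹ from if_pos (by omega),
      show qpi 2 (L - 1) = (qp 2 (L - 1).toNat)⁻¹ from if_pos (by omega)]
    set b := (L - 1).toNat with hb
    have hL : L.toNat = b + 1 := by omega
    have he : (2 * L).toNat = 2 * (b + 1) := by omega
    rw [hL, he]
    have key : qp 2 (b + 1) = qp 2 b * (1 - (PowerSeries.X : PowerSeries ℚ) ^ (2 * (b + 1))) :=
      Finset.prod_range_succ _ _
    apply mul_left_cancel₀ (qp_ne_zero (b + 1))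
    calc qp 2 (b+1) * (qp 2 (b+1))⁻¹ = 1 := qp_mul_inv _
      _ = (1 - (PowerSeries.X : PowerSeries ℚ) ^ (2*(b+1))) * 1
            + (PowerSeries.X : PowerSeries ℚ) ^ (2*(b+1)) * 1 := by ring
      _ = (1 - (PowerSeries.X : PowerSeries ℚ) ^ (2*(b+1))) * (qp 2 b * (qp 2 b)⁻¹)
            + (PowerSeries.X : PowerSeries ℚ) ^ (2*(b+1)) * (qp 2 (b+1) * (qp 2 (b+1))⁻¹) := by
          rw [qp_mul_inv, qp_mul_inv]
      _ = qp 2 (b+1) * ((qp 2 b)⁻¹ + (PowerSeries.X : PowerSeries ℚ) ^ (2*(b+1)) * (qp 2 (b+1))⁻¹) := by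
          rw [key]; ring

noncomputable def Rf (N ν k : ℤ) : PowerSeries ℚ :=
  (PowerSeries.X : PowerSeries ℚ) ^ ((2 * k ^ 2 - k).toNat) * qpi 2 (N + k) * qpi 2 (N + ν - k)

private lemma Xshift1 (a b c d : ℕ) (h : a + b = c + d) (u v : PowerSeries ℚ) :
    (PowerSeries.X : PowerSeries ℚ) ^ a * u * ((PowerSeries.X : PowerSeries ℚ) ^ b * v)
      = (PowerSeries.X : PowerSeries ℚ) ^ c * ((PowerSeries.X : PowerSeries ℚ) ^ d * v * u) := by
  calc (PowerSeries.X : PowerSeries ℚ) ^ a * u * ((PowerSeries.X : PowerSeries ℚ) ^ b * v)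
      = (PowerSeries.X : PowerSeries ℚ) ^ (a + b) * (u * v) := by rw [pow_add]; ring
    _ = (PowerSeries.X : PowerSeries ℚ) ^ (c + d) * (u * v) := by rw [h]
    _ = (PowerSeries.X : PowerSeries ℚ) ^ c * ((PowerSeries.X : PowerSeries ℚ) ^ d * v * u) := by
        rw [pow_add]; ring

private lemma Xshift2 (a b c d : ℕ) (h : a + b = c + d) (u v : PowerSeries ℚ) :
    (PowerSeries.X : PowerSeries ℚ) ^ a * ((PowerSeries.X : PowerSeries ℚ) ^ b * u) * v
      = (PowerSeries.X : PowerSeries ℚ) ^ c * ((PowerSeries.X : PowerSeries ℚ) ^ d * v * u) := by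
  calc (PowerSeries.X : PowerSeries ℚ) ^ a * ((PowerSeries.X : PowerSeries ℚ) ^ b * u) * v
      = (PowerSeries.X : PowerSeries ℚ) ^ (a + b) * (u * v) := by rw [pow_add]; ring
    _ = (PowerSeries.X : PowerSeries ℚ) ^ (c + d) * (u * v) := by rw [h]
    _ = (PowerSeries.X : PowerSeries ℚ) ^ c * ((PowerSeries.X : PowerSeries ℚ) ^ d * v * u) := by
        rw [pow_add]; ring

lemma Rrec1 (N : ℕ) (k : ℤ) :
    Rf N 1 k = Rf N 0 k + (PowerSeries.X : PowerSeries ℚ) ^ (2 * N + 1) * Rf N 1 (1 - k) := by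
  unfold Rf
  have e1 : (N : ℤ) + 1 - k - 1 = (N : ℤ) + 0 - k := by ring
  have step := qpi_step ((N : ℤ) + 1 - k)
  rw [e1] at step
  rw [step, mul_add]
  congr 1
  have e2 : (N : ℤ) + (1 - k) = (N : ℤ) + 1 - k := by ring
  have e3 : (N : ℤ) + 1 - (1 - k) = (N : ℤ) + k := by ring
  rw [e2, e3]
  rcases le_or_gt k ((N : ℤ) + 1) with hk | hk
  · have h1 : (0 : ℤ) ≤ 2 * k ^ 2 - k := by nlinarith [sq_nonneg k, sq_nonneg (k - 1)]
    have h2 : (0 : ℤ) ≤ 2 * ((N : ℤ) + 1 - k) := by omega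
    have h3 : (0 : ℤ) ≤ 2 * (1 - k) ^ 2 - (1 - k) := by nlinarith [sq_nonneg (1 - k), sq_nonneg k]
    have hx : (2 * k ^ 2 - k).toNat + (2 * ((N : ℤ) + 1 - k)).toNat
        = (2 * N + 1) + (2 * (1 - k) ^ 2 - (1 - k)).toNat := by
      have : ((2 * k ^ 2 - k).toNat : ℤ) + ((2 * ((N : ℤ) + 1 - k)).toNat : ℤ)
          = ((2 * N + 1 : ℕ) : ℤ) + ((2 * (1 - k) ^ 2 - (1 - k)).toNat : ℤ) := by
        rw [Int.toNat_of_nonneg h1, Int.toNat_of_nonneg h2, Int.toNat_of_nonneg h3]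
        push_cast
        ring
      exact_mod_cast this
    exact Xshift1 _ _ _ _ hx _ _
  · rw [qpi_zero' (by omega : (N : ℤ) + 1 - k < 0)]
    ring

lemma Rrec0 (N : ℕ) (k : ℤ) :
    Rf ((N : ℤ) + 1) 0 k = Rf N 1 k +
      (PowerSeries.X : PowerSeries ℚ) ^ (2 * N + 2) * Rf ((N : ℤ) + 1) 0 (-k) := by
  unfold Rf
  have e1 : (N : ℤ) + 1 + k - 1 = (N : ℤ) + k := by ring
  have step := qpi_step ((N : ℤ) + 1 + k)
  rw [e1] at step
  have eA : (N : ℤ) + 1 + 0 - k = (N : ℤ) + 1 - k := by ring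
  have eB : (N : ℤ) + 1 + 0 - -k = (N : ℤ) + 1 + k := by ring
  have eC : (N : ℤ) + 1 + -k = (N : ℤ) + 1 - k := by ring
  rw [step, eA, eB, eC, mul_add, add_mul]
  congr 1
  rcases le_or_gt (-((N : ℤ) + 1)) k with hk | hk
  · have h1 : (0 : ℤ) ≤ 2 * k ^ 2 - k := by nlinarith [sq_nonneg k, sq_nonneg (k - 1)]
    have h2 : (0 : ℤ) ≤ 2 * ((N : ℤ) + 1 + k) := by omega
    have h3 : (0 : ℤ) ≤ 2 * (-k) ^ 2 - (-k) := by nlinarith [sq_nonneg k, sq_nonneg (k + 1)]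
    have hx : (2 * k ^ 2 - k).toNat + (2 * ((N : ℤ) + 1 + k)).toNat
        = (2 * N + 2) + (2 * (-k) ^ 2 - (-k)).toNat := by
      have : ((2 * k ^ 2 - k).toNat : ℤ) + ((2 * ((N : ℤ) + 1 + k)).toNat : ℤ)
          = ((2 * N + 2 : ℕ) : ℤ) + ((2 * (-k) ^ 2 - (-k)).toNat : ℤ) := by
        rw [Int.toNat_of_nonneg h1, Int.toNat_of_nonneg h2, Int.toNat_of_nonneg h3]
        push_cast
        ring
      exact_mod_cast this
    exact Xshift2 _ _ _ _ hx _ _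
  · rw [qpi_zero' (by omega : (N : ℤ) + 1 + k < 0)]
    ring

/-! ### The main induction -/

noncomputable def Lf (M : ℕ) (k : ℤ) : PowerSeries ℚ :=
  GF (fun μ => μ.rowLen 0 ≤ M ∧ BGr μ = k)

lemma coeff_Lf (n M : ℕ) (k : ℤ) :
    (PowerSeries.coeff n) (Lf M k) = ((SA n M k).ncard : ℚ) := by
  rw [Lf, GF, PowerSeries.coeff_mk]
  norm_cast

lemma Lrec (M : ℕ) (k : ℤ) :
    Lf (M + 1) k = Lf M k +
      (PowerSeries.X : PowerSeries ℚ) ^ (M + 1) * Lf (M + 1) ((((M + 1) % 2 : ℕ) : ℤ) - k) := by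
  ext n
  rw [map_add, PowerSeries.coeff_X_pow_mul', coeff_Lf, coeff_Lf, SA_split n M k,
    Nat.cast_add]
  congr 1
  split_ifs with hn
  · rw [coeff_Lf]
    have hb := SE_ncard (n - (M + 1)) (M + 1) k
    rw [show n - (M + 1) + (M + 1) = n by omega] at hb
    rw [hb]
  · rw [SE_empty n (M + 1) k (by omega), Set.ncard_empty]
    norm_num

lemma rowLen0_eq_zero {μ : YoungDiagram} (h : μ.rowLen 0 = 0) : μ = ⊥ := by
  rw [YoungDiagram.ext_iff, YoungDiagram.cells_bot]
  apply Finset.eq_empty_of_forall_notMem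
  rintro ⟨i, j⟩ hm
  have h0 : (0, 0) ∈ μ := μ.up_left_mem (Nat.zero_le _) (Nat.zero_le _) hm
  rw [YoungDiagram.mem_iff_lt_rowLen, h] at h0
  omega

lemma BGr_bot : BGr ⊥ = 0 := by
  unfold BGr rCount
  rw [YoungDiagram.cells_bot]
  simp

lemma rowLen_bot : (⊥ : YoungDiagram).rowLen 0 = 0 := by
  apply rowLen_eq_of_mem_iff
  intro j
  constructor
  · intro hm
    rw [← YoungDiagram.mem_cells, YoungDiagram.cells_bot] at hm
    simp at hm
  · omega

lemma Lf_base (k : ℤ) : Lf 0 k = Rf 0 0 k := by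
  by_cases hk : k = 0
  · subst hk
    have hR : Rf 0 0 0 = 1 := by
      unfold Rf
      norm_num [qpi_zero]
    rw [hR]
    ext n
    rw [coeff_Lf, PowerSeries.coeff_one]
    by_cases hn : n = 0
    · subst hn
      rw [if_pos rfl]
      have hs : SA 0 0 0 = {⊥} := by
        ext μ
        simp only [SA, Set.mem_setOf_eq, Set.mem_singleton_iff]
        constructor
        · rintro ⟨h1, h2, h3⟩
          exact rowLen0_eq_zero (by omega)
        · rintro rfl
          refine ⟨?_, by rw [rowLen_bot], BGr_bot⟩
          rw [YoungDiagram.cells_bot]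
          rfl
      rw [hs, Set.ncard_singleton]
      norm_num
    · rw [if_neg hn]
      have hs : SA n 0 0 = ∅ := by
        ext μ
        simp only [SA, Set.mem_setOf_eq, Set.mem_empty_iff_false, iff_false]
        rintro ⟨h1, h2, _⟩
        have hbot := rowLen0_eq_zero (show μ.rowLen 0 = 0 by omega)
        subst hbot
        rw [YoungDiagram.cells_bot] at h1
        simp at h1
        omega
      rw [hs, Set.ncard_empty]
      norm_num
  · have hR : Rf 0 0 k = 0 := by
      unfold Rf
      rcases lt_or_gt_of_ne hk with h | h
      · rw [qpi_zero' (show (0:ℤ) + k < 0 by omega)]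
        ring
      · rw [qpi_zero' (show (0:ℤ) + 0 - k < 0 by omega)]
        ring
    rw [hR]
    ext n
    rw [coeff_Lf, map_zero]
    have hs : SA n 0 k = ∅ := by
      ext μ
      simp only [SA, Set.mem_setOf_eq, Set.mem_empty_iff_false, iff_false]
      rintro ⟨h1, h2, h3⟩
      have hbot := rowLen0_eq_zero (μ := μ) (by omega)
      subst hbot
      rw [BGr_bot] at h3
      exact hk h3.symm
    rw [hs, Set.ncard_empty]
    norm_num

lemma unique_sol {M : ℕ} (hM : 0 < M) (G F₁ F₂ : ℤ → PowerSeries ℚ) (σ : ℤ → ℤ)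
    (hσ : ∀ k, σ (σ k) = k)
    (h₁ : ∀ k, F₁ k = G k + (PowerSeries.X : PowerSeries ℚ) ^ M * F₁ (σ k))
    (h₂ : ∀ k, F₂ k = G k + (PowerSeries.X : PowerSeries ℚ) ^ M * F₂ (σ k)) (k : ℤ) :
    F₁ k = F₂ k := by
  have hD : ∀ k, F₁ k - F₂ k
      = (PowerSeries.X : PowerSeries ℚ) ^ M * (F₁ (σ k) - F₂ (σ k)) := fun k => by
    rw [h₁ k, h₂ k]; ring
  have h2D : F₁ k - F₂ k = (PowerSeries.X : PowerSeries ℚ) ^ M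
      * ((PowerSeries.X : PowerSeries ℚ) ^ M * (F₁ k - F₂ k)) := by
    conv_lhs => rw [hD k]
    rw [hD (σ k), hσ k]
  have hzero : (1 - (PowerSeries.X : PowerSeries ℚ) ^ M * (PowerSeries.X : PowerSeries ℚ) ^ M)
      * (F₁ k - F₂ k) = 0 := by
    linear_combination h2D
  have hne : (1 : PowerSeries ℚ)
      - (PowerSeries.X : PowerSeries ℚ) ^ M * (PowerSeries.X : PowerSeries ℚ) ^ M ≠ 0 := by
    intro hc
    have hcc := congrArg (PowerSeries.constantCoeff) hc
    rw [map_sub, map_one, map_mul, map_pow, PowerSeries.constantCoeff_X,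
      zero_pow (by omega), mul_zero, sub_zero, map_zero] at hcc
    norm_num at hcc
  rcases mul_eq_zero.mp hzero with h | h
  · exact absurd h hne
  · exact sub_eq_zero.mp h

lemma main_ind : ∀ M : ℕ, ∀ k : ℤ, Lf M k = Rf ((M / 2 : ℕ) : ℤ) ((M % 2 : ℕ) : ℤ) k := by
  intro M
  induction M with
  | zero =>
    intro k
    simpa using Lf_base k
  | succ M ih =>
    intro k
    refine unique_sol (M := M + 1) (by omega) (fun k => Lf M k) (fun k => Lf (M + 1) k)
      (fun k => Rf (((M + 1) / 2 : ℕ) : ℤ) (((M + 1) % 2 : ℕ) : ℤ) k)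
      (fun k => (((M + 1) % 2 : ℕ) : ℤ) - k) (fun k => by ring) (fun k => Lrec M k) ?_ k
    intro k'
    show Rf _ _ k' = Lf M k' + _
    rw [ih k']
    rcases Nat.even_or_odd M with ⟨t, ht⟩ | ⟨t, ht⟩
    · subst ht
      rw [show (t + t + 1) % 2 = 1 by omega, show (t + t + 1) / 2 = t by omega,
        show (t + t) / 2 = t by omega, show (t + t) % 2 = 0 by omega,
        show t + t + 1 = 2 * t + 1 by omega]
      push_cast
      exact Rrec1 t k'
    · subst ht
      rw [show (2 * t + 1 + 1) % 2 = 0 by omega, show (2 * t + 1 + 1) / 2 = t + 1 by omega,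
        show (2 * t + 1) / 2 = t by omega, show (2 * t + 1) % 2 = 1 by omega,
        show 2 * t + 1 + 1 = 2 * t + 2 by omega]
      push_cast
      rw [zero_sub]
      exact Rrec0 t k'


end BGaux

/-- generating function for partitions with parts ≤ 2N+ν and BG-rank k. -/
theorem genfn_bg_rank (N : ℕ) (k : ℤ) (ν : ℕ) (hν : ν ≤ 1) :
    GF (fun μ => μ.rowLen 0 ≤ 2 * N + ν ∧
        (rCount μ 2 (0 : ZMod 2) : ℤ) - (rCount μ 2 (1 : ZMod 2) : ℤ) = k) =
      (PowerSeries.X : PowerSeries ℚ) ^ ((2 * k ^ 2 - k).toNat) *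
        qpi 2 ((N : ℤ) + k) * qpi 2 ((N : ℤ) + ν - k) := by
  have hmain := main_ind (2 * N + ν) k
  rw [show (2 * N + ν) / 2 = N by omega, show (2 * N + ν) % 2 = ν by omega] at hmain
  exact hmain
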